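/- arXiv:1909.12164 — 2 statements merged into one kernel-verified Lean document; each statement's English description precedes it below -/
import Mathlib

section
/- Let 0 → E¹ → E² → E³ → 0 be a short exact sequence of 2-periodic complexes of R-modules, with K₊ := f₋⁻¹(range(d²₊)) ⊆ E¹₋ and K₋ := f₊⁻¹(range(d²₋)) ⊆ E¹₊ (so that range(d¹₋) ⊆ K₋ and K₊ ⊆ ker(d¹₋)). Then there exists an R-linear connecting map δ : H₋(E³) → K₋/range(d¹₋) such that the sequence 0 → ker(d¹₋)/K₊ → H₋(E²) → H₋(E³) → K₋/range(d¹₋) → 0 is exact, where the first map is induced by f₋ and the second map is induced by g₋. -/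
/-- The homology `ker d₊ / range d₋` of a 2-periodic complex at the `+` spot;
swapping the differentials gives the homology at the `-` spot. -/
abbrev TwoPeriodicHomology {R : Type} [CommRing R] {Ep Em : Type}
    [AddCommGroup Ep] [AddCommGroup Em] [Module R Ep] [Module R Em]
    (dp : Ep →ₗ[R] Em) (dm : Em →ₗ[R] Ep) : Type :=
  LinearMap.ker dp ⧸ (LinearMap.range dm).comap (LinearMap.ker dp).subtype

/-- For a short exact sequence of 2-periodic complexes
`0 → E¹ → E² → E³ → 0` with `K₊ := f₋⁻¹(range d²₊)` and `K₋ := f₊⁻¹(range d²₋)`,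
there is a connecting map `δ : H₋(E³) → K₋/range(d¹₋)` making
`0 → ker(d¹₋)/K₊ → H₋(E²) → H₋(E³) → K₋/range(d¹₋) → 0` exact, where the first
map is induced by `f₋` and the second by `g₋`. -/
theorem four_term_exact_sequence_minus
    {R : Type} [CommRing R]
    {E1p E1m E2p E2m E3p E3m : Type}
    [AddCommGroup E1p] [AddCommGroup E1m] [AddCommGroup E2p] [AddCommGroup E2m]
    [AddCommGroup E3p] [AddCommGroup E3m]
    [Module R E1p] [Module R E1m] [Module R E2p] [Module R E2m]
    [Module R E3p] [Module R E3m]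
    (d1p : E1p →ₗ[R] E1m) (d1m : E1m →ₗ[R] E1p)
    (d2p : E2p →ₗ[R] E2m) (d2m : E2m →ₗ[R] E2p)
    (d3p : E3p →ₗ[R] E3m) (d3m : E3m →ₗ[R] E3p)
    (h1 : d1m.comp d1p = 0) (h1' : d1p.comp d1m = 0)
    (h2 : d2m.comp d2p = 0) (h2' : d2p.comp d2m = 0)
    (h3 : d3m.comp d3p = 0) (h3' : d3p.comp d3m = 0)
    (fp : E1p →ₗ[R] E2p) (fm : E1m →ₗ[R] E2m)
    (gp : E2p →ₗ[R] E3p) (gm : E2m →ₗ[R] E3m)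
    (hfp : d2p.comp fp = fm.comp d1p) (hfm : d2m.comp fm = fp.comp d1m)
    (hgp : d3p.comp gp = gm.comp d2p) (hgm : d3m.comp gm = gp.comp d2m)
    (hfinjp : Function.Injective fp) (hfinjm : Function.Injective fm)
    (hgsurjp : Function.Surjective gp) (hgsurjm : Function.Surjective gm)
    (hexp : LinearMap.range fp = LinearMap.ker gp)
    (hexm : LinearMap.range fm = LinearMap.ker gm) :
    ∃ (α : (↥(LinearMap.ker d1m) ⧸
            ((LinearMap.range d2p).comap fm).comap (LinearMap.ker d1m).subtype)
            →ₗ[R] TwoPeriodicHomology d2m d2p)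
      (β : TwoPeriodicHomology d2m d2p →ₗ[R] TwoPeriodicHomology d3m d3p)
      (δ : TwoPeriodicHomology d3m d3p →ₗ[R]
            (↥((LinearMap.range d2m).comap fp) ⧸
              (LinearMap.range d1m).comap ((LinearMap.range d2m).comap fp).subtype)),
      -- α is induced by f₋
      (∀ (x : E1m) (hx : x ∈ LinearMap.ker d1m) (hfx : fm x ∈ LinearMap.ker d2m),
        α (Submodule.Quotient.mk ⟨x, hx⟩) = Submodule.Quotient.mk ⟨fm x, hfx⟩) ∧
      -- β is induced by g₋
      (∀ (y : E2m) (hy : y ∈ LinearMap.ker d2m) (hgy : gm y ∈ LinearMap.ker d3m),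
        β (Submodule.Quotient.mk ⟨y, hy⟩) = Submodule.Quotient.mk ⟨gm y, hgy⟩) ∧
      -- exactness of `0 → ker(d¹₋)/K₊ → H₋(E²) → H₋(E³) → K₋/range(d¹₋) → 0`
      Function.Injective α ∧ Function.Exact α β ∧ Function.Exact β δ ∧
      Function.Surjective δ := by

  classical
  -- commuting facts pointwise
  have hfm' : ∀ x, d2m (fm x) = fp (d1m x) := fun x => LinearMap.congr_fun hfm x
  have hfp' : ∀ x, d2p (fp x) = fm (d1p x) := fun x => LinearMap.congr_fun hfp x
  have hgm' : ∀ y, d3m (gm y) = gp (d2m y) := fun y => LinearMap.congr_fun hgm y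
  have hgp' : ∀ y, d3p (gp y) = gm (d2p y) := fun y => LinearMap.congr_fun hgp y
  have hgf : ∀ x, gm (fm x) = 0 := by
    intro x
    have : fm x ∈ LinearMap.ker gm := hexm ▸ LinearMap.mem_range_self fm x
    exact this
  have hgfp : ∀ x, gp (fp x) = 0 := by
    intro x
    have : fp x ∈ LinearMap.ker gp := hexp ▸ LinearMap.mem_range_self fp x
    exact this
  -- α
  have hfker : ∀ x ∈ LinearMap.ker d1m, fm x ∈ LinearMap.ker d2m := by
    intro x hx
    have hx' : d1m x = 0 := hx
    simp [LinearMap.mem_ker, hfm' x, hx']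
  set fres : LinearMap.ker d1m →ₗ[R] LinearMap.ker d2m := fm.restrict hfker with hfres
  have hαcond : ((LinearMap.range d2p).comap fm).comap (LinearMap.ker d1m).subtype ≤
      ((LinearMap.range d2p).comap (LinearMap.ker d2m).subtype).comap fres := by
    rintro ⟨x, hx⟩ h
    exact h
  -- β
  have hgker : ∀ y ∈ LinearMap.ker d2m, gm y ∈ LinearMap.ker d3m := by
    intro y hy
    have hy' : d2m y = 0 := hy
    simp [LinearMap.mem_ker, hgm' y, hy']
  set gres : LinearMap.ker d2m →ₗ[R] LinearMap.ker d3m := gm.restrict hgker with hgres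
  have hβcond : (LinearMap.range d2p).comap (LinearMap.ker d2m).subtype ≤
      ((LinearMap.range d3p).comap (LinearMap.ker d3m).subtype).comap gres := by
    rintro ⟨y, hy⟩ ⟨w, hw⟩
    refine ⟨gp w, ?_⟩
    show d3p (gp w) = gm y
    rw [hgp' w, hw]
    rfl
  -- δ
  set S : Submodule R E2m := LinearMap.ker (d3m.comp gm) with hSdef
  have hSgp : ∀ y : S, gp (d2m (y : E2m)) = 0 := by
    rintro ⟨y, hy⟩
    rw [← hgm' y]
    exact hy
  have hSrange : ∀ y : S, d2m (y : E2m) ∈ LinearMap.range fp := by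
    intro y
    rw [hexp]
    exact hSgp y
  have hfpe : ∀ w : LinearMap.range fp,
      fp ((LinearEquiv.ofInjective fp hfinjp).symm w) = (w : E2p) := by
    intro w
    have h1 := LinearEquiv.ofInjective_apply (f := fp) (h := hfinjp)
        ((LinearEquiv.ofInjective fp hfinjp).symm w)
    rw [LinearEquiv.apply_symm_apply] at h1
    exact h1.symm
  set e := LinearEquiv.ofInjective fp hfinjp with he
  set θ : S →ₗ[R] LinearMap.range fp :=
    LinearMap.codRestrict (LinearMap.range fp) (d2m.comp S.subtype) hSrange with hθ
  set ξ : S →ₗ[R] E1p := e.symm.toLinearMap.comp θ with hξ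
  have hfpξ : ∀ y : S, fp (ξ y) = d2m (y : E2m) := by
    intro y
    rw [hξ]
    exact hfpe (θ y)
  set Km : Submodule R E1p := (LinearMap.range d2m).comap fp with hKm
  have hξKm : ∀ y : S, ξ y ∈ Km := by
    intro y
    show fp (ξ y) ∈ LinearMap.range d2m
    rw [hfpξ y]
    exact ⟨y, rfl⟩
  set ξ' : S →ₗ[R] Km := ξ.codRestrict Km hξKm with hξ'
  set N1 : Submodule R Km := (LinearMap.range d1m).comap Km.subtype with hN1
  set φ : S →ₗ[R] (Km ⧸ N1) := N1.mkQ.comp ξ' with hφ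
  -- q : S → H₋(E³)
  have hSg : ∀ y : S, gm (y : E2m) ∈ LinearMap.ker d3m := fun y => y.2
  set gres2 : S →ₗ[R] LinearMap.ker d3m :=
    LinearMap.codRestrict _ (gm.comp S.subtype) hSg with hgres2
  set N3 : Submodule R (LinearMap.ker d3m) :=
    (LinearMap.range d3p).comap (LinearMap.ker d3m).subtype with hN3
  set q : S →ₗ[R] (LinearMap.ker d3m ⧸ N3) := N3.mkQ.comp gres2 with hq
  have hqsurj : Function.Surjective q := by
    intro c
    obtain ⟨⟨z, hz⟩, rfl⟩ := Submodule.Quotient.mk_surjective _ c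
    obtain ⟨y, hy⟩ := hgsurjm z
    have hyS : y ∈ S := by
      show d3m (gm y) = 0
      rw [hy]; exact hz
    refine ⟨⟨y, hyS⟩, ?_⟩
    show Submodule.Quotient.mk (gres2 ⟨y, hyS⟩) = Submodule.Quotient.mk (⟨z, hz⟩ : LinearMap.ker d3m)
    congr 1
    exact Subtype.ext hy
  have hkerq : LinearMap.ker q ≤ LinearMap.ker φ := by
    rintro ⟨y, hyS⟩ hker
    have h0 : Submodule.Quotient.mk (gres2 ⟨y, hyS⟩) = (0 : LinearMap.ker d3m ⧸ N3) := hker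
    rw [Submodule.Quotient.mk_eq_zero] at h0
    obtain ⟨u, hu⟩ := h0
    have hu' : d3p u = gm y := hu
    obtain ⟨v, hv⟩ := hgsurjp u
    have hgmv : gm (d2p v) = gm y := by rw [← hgp' v, hv, hu']
    have : y - d2p v ∈ LinearMap.ker gm := by
      simp [LinearMap.mem_ker, map_sub, hgmv]
    rw [← hexm] at this
    obtain ⟨t, ht⟩ := this
    have hd2my : d2m y = fp (d1m t) := by
      have : d2m (fm t) = d2m y - d2m (d2p v) := by rw [ht]; simp [map_sub]
      have h2v : d2m (d2p v) = 0 := LinearMap.congr_fun h2 v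
      rw [hfm' t] at this
      rw [this, h2v, sub_zero]
    have hξval : ξ ⟨y, hyS⟩ = d1m t := by
      apply hfinjp
      rw [hfpξ ⟨y, hyS⟩, hd2my]
    show Submodule.Quotient.mk (ξ' ⟨y, hyS⟩) = (0 : Km ⧸ N1)
    rw [Submodule.Quotient.mk_eq_zero]
    show ξ ⟨y, hyS⟩ ∈ LinearMap.range d1m
    rw [hξval]
    exact ⟨t, rfl⟩
  have hδq : ∀ y : S,
      (((LinearMap.ker q).liftQ φ hkerq).comp
        (q.quotKerEquivOfSurjective hqsurj).symm.toLinearMap) (q y) = φ y := by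
    intro y
    have h1 : q.quotKerEquivOfSurjective hqsurj (Submodule.Quotient.mk y) = q y := by
      rw [LinearMap.quotKerEquivOfSurjective]
      simp only [LinearEquiv.trans_apply, LinearMap.quotKerEquivRange_apply_mk,
        LinearEquiv.ofTop_apply]
    have h2 : (q.quotKerEquivOfSurjective hqsurj).symm (q y) = Submodule.Quotient.mk y := by
      rw [← h1, LinearEquiv.symm_apply_apply]
    simp only [LinearMap.comp_apply, LinearEquiv.coe_coe, h2, Submodule.liftQ_apply]
  refine ⟨Submodule.mapQ _ _ fres hαcond, Submodule.mapQ _ _ gres hβcond,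
    ((LinearMap.ker q).liftQ φ hkerq).comp
      (q.quotKerEquivOfSurjective hqsurj).symm.toLinearMap, ?_, ?_, ?_, ?_, ?_, ?_⟩
  · intro x hx hfx
    rw [Submodule.mapQ_apply]
    rfl
  · intro y hy hgy
    rw [Submodule.mapQ_apply]
    rfl
  · -- injectivity of α
    rw [injective_iff_map_eq_zero]
    intro a ha
    obtain ⟨⟨x, hx⟩, rfl⟩ := Submodule.Quotient.mk_surjective _ a
    rw [Submodule.mapQ_apply, Submodule.Quotient.mk_eq_zero] at ha
    rw [Submodule.Quotient.mk_eq_zero]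
    exact ha
  · -- exactness at H₋(E²)
    rw [LinearMap.exact_iff]
    apply Submodule.ext
    intro c
    obtain ⟨⟨y, hy⟩, rfl⟩ := Submodule.Quotient.mk_surjective _ c
    constructor
    · intro hc
      rw [LinearMap.mem_ker, Submodule.mapQ_apply,
        Submodule.Quotient.mk_eq_zero] at hc
      obtain ⟨u, hu⟩ := hc
      have hu' : d3p u = gm y := hu
      obtain ⟨v, hv⟩ := hgsurjp u
      have hgv : gm (d2p v) = gm y := by rw [← hgp' v, hv]; exact hu'
      have hymem : y - d2p v ∈ LinearMap.ker gm := by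
        simp [LinearMap.mem_ker, map_sub, hgv]
      rw [← hexm] at hymem
      obtain ⟨t, ht⟩ := hymem
      have hd1mt : d1m t = 0 := by
        apply hfinjp
        rw [← hfm' t, ht, map_sub, map_zero]
        have h2v : d2m (d2p v) = 0 := LinearMap.congr_fun h2 v
        have hy0 : d2m y = 0 := hy
        rw [h2v, hy0, sub_zero]
      refine ⟨Submodule.Quotient.mk ⟨t, hd1mt⟩, ?_⟩
      rw [Submodule.mapQ_apply, Submodule.Quotient.eq]
      refine ⟨-v, ?_⟩
      show d2p (-v) = fm t - y
      rw [map_neg, ht]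
      abel
    · rintro ⟨a, ha⟩
      obtain ⟨⟨t, htk⟩, rfl⟩ := Submodule.Quotient.mk_surjective _ a
      rw [LinearMap.mem_ker, ← ha, Submodule.mapQ_apply, Submodule.mapQ_apply,
        Submodule.Quotient.mk_eq_zero]
      refine ⟨0, ?_⟩
      show d3p 0 = gm (fm t)
      rw [map_zero, hgf t]
  · -- exactness at H₋(E³)
    rw [LinearMap.exact_iff]
    apply Submodule.ext
    intro c
    obtain ⟨⟨z, hz⟩, rfl⟩ := Submodule.Quotient.mk_surjective _ c
    obtain ⟨y, hy⟩ := hgsurjm z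
    have hyS : y ∈ S := by
      show d3m (gm y) = 0
      rw [hy]; exact hz
    have hqy : q ⟨y, hyS⟩ = Submodule.Quotient.mk (⟨z, hz⟩ : LinearMap.ker d3m) := by
      show Submodule.Quotient.mk (gres2 ⟨y, hyS⟩) = _
      congr 1
      exact Subtype.ext hy
    constructor
    · intro hc
      rw [LinearMap.mem_ker, ← hqy, hδq ⟨y, hyS⟩] at hc
      have h0 : Submodule.Quotient.mk (ξ' ⟨y, hyS⟩) = (0 : Km ⧸ N1) := hc
      rw [Submodule.Quotient.mk_eq_zero] at h0
      have hmem : ξ ⟨y, hyS⟩ ∈ LinearMap.range d1m := h0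
      obtain ⟨t, ht⟩ := hmem
      have hfpt : fp (d1m t) = d2m y := by rw [ht]; exact hfpξ ⟨y, hyS⟩
      have hy' : y - fm t ∈ LinearMap.ker d2m := by
        simp [LinearMap.mem_ker, map_sub, hfm' t, hfpt]
      refine ⟨Submodule.Quotient.mk ⟨y - fm t, hy'⟩, ?_⟩
      rw [Submodule.mapQ_apply]
      congr 1
      apply Subtype.ext
      show gm (y - fm t) = z
      rw [map_sub, hgf t, sub_zero, hy]
    · rintro ⟨b, hb⟩
      obtain ⟨⟨w, hw⟩, rfl⟩ := Submodule.Quotient.mk_surjective _ b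
      rw [LinearMap.mem_ker, ← hb, Submodule.mapQ_apply]
      have hwS : w ∈ S := by
        show d3m (gm w) = 0
        rw [hgm' w]
        have hw0 : d2m w = 0 := hw
        rw [hw0, map_zero]
      have hmk : Submodule.Quotient.mk (gres ⟨w, hw⟩) = q ⟨w, hwS⟩ := by
        show _ = Submodule.Quotient.mk (gres2 ⟨w, hwS⟩)
        congr 1
      rw [hmk, hδq]
      have hξ0 : ξ ⟨w, hwS⟩ = 0 := by
        apply hfinjp
        rw [map_zero, hfpξ ⟨w, hwS⟩]
        exact hw
      show Submodule.Quotient.mk (ξ' ⟨w, hwS⟩) = 0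
      rw [Submodule.Quotient.mk_eq_zero]
      show ξ ⟨w, hwS⟩ ∈ LinearMap.range d1m
      rw [hξ0]
      exact ⟨0, map_zero _⟩
  · -- surjectivity of δ
    intro d
    obtain ⟨⟨x, hx⟩, rfl⟩ := Submodule.Quotient.mk_surjective _ d
    have hx' : fp x ∈ LinearMap.range d2m := hx
    obtain ⟨y, hy⟩ := hx'
    have hyS : y ∈ S := by
      show d3m (gm y) = 0
      rw [hgm' y, hy, hgfp x]
    have hz : gm y ∈ LinearMap.ker d3m := hyS
    refine ⟨Submodule.Quotient.mk ⟨gm y, hz⟩, ?_⟩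
    have hmk : Submodule.Quotient.mk (⟨gm y, hz⟩ : LinearMap.ker d3m) = q ⟨y, hyS⟩ := by
      show _ = Submodule.Quotient.mk (gres2 ⟨y, hyS⟩)
      congr 1
    rw [hmk, hδq]
    have hξx : ξ ⟨y, hyS⟩ = x := by
      apply hfinjp
      rw [hfpξ ⟨y, hyS⟩]
      exact hy
    show Submodule.Quotient.mk (ξ' ⟨y, hyS⟩) = Submodule.Quotient.mk (⟨x, hx⟩ : Km)
    congr 1
    exact Subtype.ext hξx
end

section
/- Let E be a 2-periodic complex of R-modules, r ∈ R, and let C = C(r·id) be the mapping cone of multiplication by r on E. Let χ be an additive invariant with values in an abelian group A. Then χ(H₊(C)) − χ(H₋(C)) = (χ(H₊(E)/r·H₊(E)) − χ({m ∈ H₊(E) : r·m = 0})) − (χ(H₋(E)/r·H₋(E)) − χ({m ∈ H₋(E) : r·m = 0})). (This is the module-level form of the compatibility of the Gysin specialization with the alternating sum of homology, Lemma 2.9.) -/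
section Cone
variable {R : Type} [CommRing R] {Ep Em : Type}
  [AddCommGroup Ep] [AddCommGroup Em] [Module R Ep] [Module R Em]

/-- The even-to-odd differential of the mapping cone of a chain endomorphism
`u = (u₊, u₋)` of a 2-periodic complex: `(x, y) ↦ (d₊x + u₋ y, −d₋ y)`. -/
def coneDp (dp : Ep →ₗ[R] Em) (dm : Em →ₗ[R] Ep) (um : Em →ₗ[R] Em) :
    (Ep × Em) →ₗ[R] (Em × Ep) :=
  LinearMap.prod
    (dp.comp (LinearMap.fst R Ep Em) + um.comp (LinearMap.snd R Ep Em))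
    (-(dm.comp (LinearMap.snd R Ep Em)))

/-- The odd-to-even differential of the mapping cone of a chain endomorphism
`u = (u₊, u₋)` of a 2-periodic complex: `(y, x) ↦ (d₋y + u₊ x, −d₊ x)`. -/
def coneDm (dp : Ep →ₗ[R] Em) (dm : Em →ₗ[R] Ep) (up : Ep →ₗ[R] Ep) :
    (Em × Ep) →ₗ[R] (Ep × Em) :=
  LinearMap.prod
    (dm.comp (LinearMap.fst R Em Ep) + up.comp (LinearMap.snd R Em Ep))
    (-(dp.comp (LinearMap.snd R Em Ep)))

lemma coneDp_apply (dp : Ep →ₗ[R] Em) (dm : Em →ₗ[R] Ep) (um : Em →ₗ[R] Em)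
    (z : Ep × Em) : coneDp dp dm um z = (dp z.1 + um z.2, -(dm z.2)) := rfl

lemma coneDm_apply (dp : Ep →ₗ[R] Em) (dm : Em →ₗ[R] Ep) (up : Ep →ₗ[R] Ep)
    (z : Em × Ep) : coneDm dp dm up z = (dm z.1 + up z.2, -(dp z.2)) := rfl

set_option maxHeartbeats 1000000 in
/-- Half of the statement: there is a short exact sequence
`0 → H₊E/rH₊E → H₊C → ker(r | H₋E) → 0`, hence `χ` of the middle is the sum. -/
lemma chi_cone_half
    {A : Type} [AddCommGroup A]
    (χ : (M : Type) → [AddCommGroup M] → [Module R M] → A)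
    (hχ : ∀ (M' M M'' : Type) [AddCommGroup M'] [AddCommGroup M] [AddCommGroup M'']
        [Module R M'] [Module R M] [Module R M'']
        (f : M' →ₗ[R] M) (g : M →ₗ[R] M''),
        Function.Injective f → Function.Surjective g →
        LinearMap.range f = LinearMap.ker g → χ M = χ M' + χ M'')
    (dp : Ep →ₗ[R] Em) (dm : Em →ₗ[R] Ep)
    (hc : dm.comp dp = 0) (hc' : dp.comp dm = 0) (r : R) :
    χ (TwoPeriodicHomology
        (coneDp dp dm (r • (LinearMap.id : Em →ₗ[R] Em)))
        (coneDm dp dm (r • (LinearMap.id : Ep →ₗ[R] Ep)))) =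
    χ (TwoPeriodicHomology dp dm ⧸
          LinearMap.range (r • (LinearMap.id :
            TwoPeriodicHomology dp dm →ₗ[R] TwoPeriodicHomology dp dm))) +
    χ ↥(LinearMap.ker (r • (LinearMap.id :
            TwoPeriodicHomology dm dp →ₗ[R] TwoPeriodicHomology dm dp))) := by
  classical
  set Kp : Submodule R Ep := LinearMap.ker dp with hKp
  set Km : Submodule R Em := LinearMap.ker dm with hKm
  set Bp : Submodule R Kp := (LinearMap.range dm).comap Kp.subtype with hBp
  set Bm : Submodule R Km := (LinearMap.range dp).comap Km.subtype with hBm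
  set DC : (Ep × Em) →ₗ[R] (Em × Ep) := coneDp dp dm (r • LinearMap.id) with hDC
  set DC' : (Em × Ep) →ₗ[R] (Ep × Em) := coneDm dp dm (r • LinearMap.id) with hDC'
  set KC : Submodule R (Ep × Em) := LinearMap.ker DC with hKC
  set BC : Submodule R KC := (LinearMap.range DC').comap KC.subtype with hBC
  -- membership in KC unfolded
  have memKC : ∀ z : Ep × Em, z ∈ KC ↔ dp z.1 + r • z.2 = 0 ∧ dm z.2 = 0 := by
    intro z
    rw [hKC, LinearMap.mem_ker, hDC, coneDp_apply, Prod.ext_iff]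
    simp [neg_eq_zero]
  have memRC' : ∀ z : Ep × Em, z ∈ LinearMap.range DC' ↔
      ∃ y x, dm y + r • x = z.1 ∧ -(dp x) = z.2 := by
    intro z
    constructor
    · rintro ⟨⟨y, x⟩, hw⟩
      exact ⟨y, x, by simpa [hDC', coneDm_apply, Prod.ext_iff] using hw⟩
    · rintro ⟨y, x, h1, h2⟩
      exact ⟨(y, x), by simp [hDC', coneDm_apply, Prod.ext_iff, h1, h2]⟩
  -- the map  Kp → KC,  x ↦ (x, 0)
  have hmem1 : ∀ x : Kp, ((x : Ep), (0 : Em)) ∈ KC := by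
    intro x
    rw [memKC]
    exact ⟨by simp [x.2], by simp⟩
  set toKC : Kp →ₗ[R] KC :=
    LinearMap.codRestrict KC ((LinearMap.inl R Ep Em).comp Kp.subtype)
      (fun x => hmem1 x) with htoKC
  set φ : Kp →ₗ[R] (KC ⧸ BC) := BC.mkQ.comp toKC with hφ
  have hφker : Bp ≤ LinearMap.ker φ := by
    intro x hx
    obtain ⟨y, hy⟩ := hx
    rw [LinearMap.mem_ker, hφ, LinearMap.comp_apply, Submodule.mkQ_apply,
      Submodule.Quotient.mk_eq_zero, hBC, Submodule.mem_comap]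
    rw [memRC']
    exact ⟨y, 0, by simp [htoKC, hy]; rfl, by simp [htoKC]; rfl⟩
  set ψ : (Kp ⧸ Bp) →ₗ[R] (KC ⧸ BC) := Bp.liftQ φ hφker with hψ
  set rHp : Submodule R (Kp ⧸ Bp) :=
    LinearMap.range (r • (LinearMap.id : (Kp ⧸ Bp) →ₗ[R] (Kp ⧸ Bp))) with hrHp
  have hψker : rHp ≤ LinearMap.ker ψ := by
    rintro _ ⟨h, rfl⟩
    obtain ⟨x, rfl⟩ := Submodule.Quotient.mk_surjective _ h
    rw [LinearMap.mem_ker]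
    have h1 : (r • (LinearMap.id : (Kp ⧸ Bp) →ₗ[R] (Kp ⧸ Bp))) (Submodule.Quotient.mk x)
        = Submodule.Quotient.mk (r • x) := by
      simp [Submodule.Quotient.mk_smul]
    rw [h1, hψ, Submodule.liftQ_apply, hφ, LinearMap.comp_apply, Submodule.mkQ_apply,
      Submodule.Quotient.mk_eq_zero, hBC, Submodule.mem_comap, memRC']
    exact ⟨0, (x : Ep), by simp [htoKC]; rfl, by simp [htoKC, x.2]; exact (smul_zero r).symm⟩
  set f : ((Kp ⧸ Bp) ⧸ rHp) →ₗ[R] (KC ⧸ BC) := rHp.liftQ ψ hψker with hf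
  -- the map KC → Km, (x, y) ↦ y
  have hmemKm : ∀ z : KC, (z : Ep × Em).2 ∈ Km := fun z => ((memKC z).1 z.2).2
  set γ : KC →ₗ[R] Km :=
    LinearMap.codRestrict Km ((LinearMap.snd R Ep Em).comp KC.subtype) hmemKm with hγ
  set δ : KC →ₗ[R] (Km ⧸ Bm) := Bm.mkQ.comp γ with hδ
  set rKm : Submodule R (Km ⧸ Bm) :=
    LinearMap.ker (r • (LinearMap.id : (Km ⧸ Bm) →ₗ[R] (Km ⧸ Bm))) with hrKm
  have smul_mk : ∀ (v : Km),
      (r • (LinearMap.id : (Km ⧸ Bm) →ₗ[R] (Km ⧸ Bm))) (Submodule.Quotient.mk v)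
        = Submodule.Quotient.mk (r • v) := by
    intro v; simp [Submodule.Quotient.mk_smul]
  have hδmem : ∀ z : KC, δ z ∈ rKm := by
    intro z
    rw [hrKm, LinearMap.mem_ker, hδ, LinearMap.comp_apply, Submodule.mkQ_apply, smul_mk,
      Submodule.Quotient.mk_eq_zero, hBm, Submodule.mem_comap]
    refine ⟨-(z : Ep × Em).1, ?_⟩
    have h2 := ((memKC z).1 z.2).1
    have hv : Km.subtype (r • γ z) = r • (z : Ep × Em).2 := rfl
    rw [map_neg, hv]
    exact neg_eq_of_add_eq_zero_right h2
  set δ' : KC →ₗ[R] rKm := LinearMap.codRestrict rKm δ hδmem with hδ'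
  have hδ'ker : BC ≤ LinearMap.ker δ' := by
    intro z hz
    rw [hBC, Submodule.mem_comap, memRC'] at hz
    obtain ⟨y, x, h1, h2⟩ := hz
    rw [LinearMap.mem_ker]
    apply Subtype.ext
    show δ z = 0
    rw [hδ, LinearMap.comp_apply, Submodule.mkQ_apply, Submodule.Quotient.mk_eq_zero,
      hBm, Submodule.mem_comap]
    exact ⟨-x, by rw [map_neg]; exact h2⟩
  set g : (KC ⧸ BC) →ₗ[R] rKm := BC.liftQ δ' hδ'ker with hg
  -- injectivity of f
  have hfinj : Function.Injective f := by
    rw [← LinearMap.ker_eq_bot, LinearMap.ker_eq_bot']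
    intro m hm
    obtain ⟨h, rfl⟩ := Submodule.Quotient.mk_surjective _ m
    obtain ⟨x, rfl⟩ := Submodule.Quotient.mk_surjective _ h
    rw [hf, Submodule.liftQ_apply, hψ, Submodule.liftQ_apply, hφ, LinearMap.comp_apply,
      Submodule.mkQ_apply, Submodule.Quotient.mk_eq_zero, hBC, Submodule.mem_comap,
      memRC'] at hm
    obtain ⟨y, x', h1, h2⟩ := hm
    have hx' : x' ∈ Kp := by
      have h2' : -dp x' = (0 : Em) := h2
      rw [hKp, LinearMap.mem_ker]
      simpa [neg_eq_zero] using h2'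
    rw [Submodule.Quotient.mk_eq_zero, hrHp, LinearMap.mem_range]
    refine ⟨Submodule.Quotient.mk ⟨x', hx'⟩, ?_⟩
    have hsm : (r • (LinearMap.id : (Kp ⧸ Bp) →ₗ[R] (Kp ⧸ Bp)))
        (Submodule.Quotient.mk ⟨x', hx'⟩) = Submodule.Quotient.mk (r • (⟨x', hx'⟩ : Kp)) := by
      simp only [LinearMap.smul_apply, LinearMap.id_apply]
      exact (Submodule.Quotient.mk_smul _ _ _).symm
    rw [hsm, ← sub_eq_zero, ← Submodule.Quotient.mk_sub, Submodule.Quotient.mk_eq_zero,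
      hBp, Submodule.mem_comap]
    refine ⟨-y, ?_⟩
    have hv2 : Kp.subtype (r • (⟨x', hx'⟩ : Kp) - x) = r • x' - (x : Ep) := rfl
    rw [map_neg, hv2]
    have h1' : dm y + r • x' = (x : Ep) := h1
    rw [← h1']; abel
  -- surjectivity of g
  have hgsurj : Function.Surjective g := by
    rintro ⟨t, ht⟩
    obtain ⟨⟨y, hy⟩, rfl⟩ := Submodule.Quotient.mk_surjective _ t
    rw [hrKm, LinearMap.mem_ker, smul_mk, Submodule.Quotient.mk_eq_zero, hBm,
      Submodule.mem_comap] at ht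
    obtain ⟨z, hz⟩ := ht
    have hzKC : ((-z : Ep), y) ∈ KC := by
      rw [memKC]
      constructor
      · have hvv : Km.subtype (r • (⟨y, hy⟩ : Km)) = r • y := rfl
        rw [map_neg, hz, hvv]
        exact neg_add_cancel _
      · exact hy
    refine ⟨Submodule.Quotient.mk ⟨(-z, y), hzKC⟩, ?_⟩
    apply Subtype.ext
    rw [hg, Submodule.liftQ_apply]
    rfl
  -- range f = ker g
  have hrange : LinearMap.range f = LinearMap.ker g := by
    apply le_antisymm
    · rintro _ ⟨a, rfl⟩
      obtain ⟨h, rfl⟩ := Submodule.Quotient.mk_surjective _ a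
      obtain ⟨x, rfl⟩ := Submodule.Quotient.mk_surjective _ h
      rw [LinearMap.mem_ker, hf, Submodule.liftQ_apply, hψ, Submodule.liftQ_apply, hφ,
        LinearMap.comp_apply, Submodule.mkQ_apply, hg, Submodule.liftQ_apply]
      apply Subtype.ext
      show δ (toKC x) = 0
      rw [hδ, LinearMap.comp_apply, Submodule.mkQ_apply, Submodule.Quotient.mk_eq_zero,
        hBm, Submodule.mem_comap]
      refine ⟨0, ?_⟩
      have : Km.subtype (γ (toKC x)) = (0 : Em) := rfl
      rw [this, map_zero]
    · intro c hc
      obtain ⟨⟨z, hz⟩, rfl⟩ := Submodule.Quotient.mk_surjective _ c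
      rw [LinearMap.mem_ker, hg, Submodule.liftQ_apply] at hc
      have hc2 : γ ⟨z, hz⟩ ∈ Bm := by
        rw [← Submodule.Quotient.mk_eq_zero]
        have : (Submodule.Quotient.mk (γ ⟨z, hz⟩) : Km ⧸ Bm) = δ ⟨z, hz⟩ := rfl
        rw [this]
        exact congrArg Subtype.val hc
      rw [hBm, Submodule.mem_comap] at hc2
      obtain ⟨w, hw⟩ := hc2
      have hw' : dp w = z.2 := hw
      have hx1 : z.1 + r • w ∈ Kp := by
        rw [hKp, LinearMap.mem_ker, map_add, map_smul, hw']
        have := ((memKC z).1 hz).1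
        simpa using this
      refine ⟨Submodule.Quotient.mk (Submodule.Quotient.mk ⟨z.1 + r • w, hx1⟩), ?_⟩
      rw [hf, Submodule.liftQ_apply, hψ, Submodule.liftQ_apply, hφ, LinearMap.comp_apply,
        Submodule.mkQ_apply, ← sub_eq_zero, ← Submodule.Quotient.mk_sub,
        Submodule.Quotient.mk_eq_zero, hBC, Submodule.mem_comap, memRC']
      refine ⟨0, w, ?_, ?_⟩
      · have hv3 : (KC.subtype (toKC ⟨z.1 + r • w, hx1⟩ - ⟨z, hz⟩)).1 = z.1 + r • w - z.1 := rfl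
        rw [hv3]; simp
      · have hv4 : (KC.subtype (toKC ⟨z.1 + r • w, hx1⟩ - ⟨z, hz⟩)).2 = 0 - z.2 := rfl
        rw [hv4, ← hw']; simp
  exact hχ _ _ _ f g hfinj hgsurj hrange
/-- For the mapping cone `C = C(r·id)` of multiplication by `r` on
a 2-periodic complex `E`, and an additive invariant `χ` with values in `A`:
`χ(H₊C) − χ(H₋C) = (χ(H₊E/rH₊E) − χ(r-torsion of H₊E)) − (χ(H₋E/rH₋E) − χ(r-torsion of H₋E))`. -/
theorem chi_cone_smul_eq
    {A : Type} [AddCommGroup A]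
    (χ : (M : Type) → [AddCommGroup M] → [Module R M] → A)
    (hχ : ∀ (M' M M'' : Type) [AddCommGroup M'] [AddCommGroup M] [AddCommGroup M'']
        [Module R M'] [Module R M] [Module R M'']
        (f : M' →ₗ[R] M) (g : M →ₗ[R] M''),
        Function.Injective f → Function.Surjective g →
        LinearMap.range f = LinearMap.ker g → χ M = χ M' + χ M'')
    (dp : Ep →ₗ[R] Em) (dm : Em →ₗ[R] Ep)
    (hc : dm.comp dp = 0) (hc' : dp.comp dm = 0) (r : R) :
    χ (TwoPeriodicHomology
        (coneDp dp dm (r • (LinearMap.id : Em →ₗ[R] Em)))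
        (coneDm dp dm (r • (LinearMap.id : Ep →ₗ[R] Ep)))) -
      χ (TwoPeriodicHomology
        (coneDm dp dm (r • (LinearMap.id : Ep →ₗ[R] Ep)))
        (coneDp dp dm (r • (LinearMap.id : Em →ₗ[R] Em)))) =
    (χ (TwoPeriodicHomology dp dm ⧸
          LinearMap.range (r • (LinearMap.id :
            TwoPeriodicHomology dp dm →ₗ[R] TwoPeriodicHomology dp dm))) -
        χ ↥(LinearMap.ker (r • (LinearMap.id :
            TwoPeriodicHomology dp dm →ₗ[R] TwoPeriodicHomology dp dm)))) -
      (χ (TwoPeriodicHomology dm dp ⧸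
          LinearMap.range (r • (LinearMap.id :
            TwoPeriodicHomology dm dp →ₗ[R] TwoPeriodicHomology dm dp))) -
        χ ↥(LinearMap.ker (r • (LinearMap.id :
            TwoPeriodicHomology dm dp →ₗ[R] TwoPeriodicHomology dm dp)))) := by
  have h1 := chi_cone_half χ hχ dp dm hc hc' r
  have h2 := chi_cone_half χ hχ dm dp hc' hc r
  rw [show coneDp dm dp (r • (LinearMap.id : Ep →ₗ[R] Ep))
        = coneDm dp dm (r • (LinearMap.id : Ep →ₗ[R] Ep)) from rfl,
      show coneDm dm dp (r • (LinearMap.id : Em →ₗ[R] Em))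
        = coneDp dp dm (r • (LinearMap.id : Em →ₗ[R] Em)) from rfl] at h2
  rw [h1, h2]
  abel

end Cone
end
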